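/- arXiv:2506.01815 — 3 statements merged into one kernel-verified Lean document; each statement's English description precedes it below -/
import Mathlib

section
/- Let X : [a,b] → ℝ^d be a path with C¹ components and let φ : [a,b] → [a,b] be a C¹ non-decreasing surjection with φ(a) = a and φ(b) = b. Then for any indices i_1, i_2, the second-order iterated integral ∫_a^b ∫_a^{t_2} 1 dX^{i_1}_{t_1} dX^{i_2}_{t_2} equals the corresponding iterated integral of the reparameterized path t ↦ X_{φ(t)}. -/
open MeasureTheory intervalIntegral

/-- Invariance of second-order iterated integrals under a C¹,
non-decreasing reparameterization φ of [a,b] onto itself fixing the endpoints. -/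
theorem iterated_integral_reparam_invariant (d : ℕ) (a b : ℝ) (hab : a ≤ b)
    (X : ℝ → Fin d → ℝ) (hX : ∀ i, ContDiff ℝ 1 (fun t => X t i))
    (φ : ℝ → ℝ) (hφ : ContDiff ℝ 1 φ) (hφmono : MonotoneOn φ (Set.Icc a b))
    (hφmaps : Set.SurjOn φ (Set.Icc a b) (Set.Icc a b))
    (hφa : φ a = a) (hφb : φ b = b) (i1 i2 : Fin d) :
    (∫ t2 in a..b, (∫ t1 in a..t2, deriv (fun t => X t i1) t1) *
        deriv (fun t => X t i2) t2) =
    ∫ t2 in a..b, (∫ t1 in a..t2, deriv (fun t => X (φ t) i1) t1) *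
        deriv (fun t => X (φ t) i2) t2 := by
  have hF1 : ContDiff ℝ 1 (fun t => X t i1) := hX i1
  have hF2 : ContDiff ℝ 1 (fun t => X t i2) := hX i2
  have hcomp1 : ContDiff ℝ 1 (fun t => X (φ t) i1) := hF1.comp hφ
  have hcomp2 : ContDiff ℝ 1 (fun t => X (φ t) i2) := hF2.comp hφ
  have inner1 : ∀ t2 : ℝ, (∫ t1 in a..t2, deriv (fun t => X t i1) t1)
      = X t2 i1 - X a i1 := fun t2 =>
    intervalIntegral.integral_deriv_eq_sub (fun x _ => (hF1.differentiable one_ne_zero) x)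
      ((hF1.continuous_deriv le_rfl).intervalIntegrable a t2)
  have inner2 : ∀ t2 : ℝ, (∫ t1 in a..t2, deriv (fun t => X (φ t) i1) t1)
      = X (φ t2) i1 - X a i1 := fun t2 => by
    rw [intervalIntegral.integral_deriv_eq_sub (fun x _ => (hcomp1.differentiable one_ne_zero) x)
      ((hcomp1.continuous_deriv le_rfl).intervalIntegrable a t2), hφa]
  simp_rw [inner1, inner2]
  have hchain : ∀ t, deriv (fun t => X (φ t) i2) t
      = deriv (fun s => X s i2) (φ t) * deriv φ t := fun t =>
    deriv_comp t ((hF2.differentiable one_ne_zero) (φ t)) ((hφ.differentiable one_ne_zero) t)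
  have key := intervalIntegral.integral_comp_smul_deriv (f := φ) (f' := deriv φ)
      (g := fun s => (X s i1 - X a i1) * deriv (fun u => X u i2) s) (a := a) (b := b)
      (fun x _ => ((hφ.differentiable one_ne_zero) x).hasDerivAt)
      ((hφ.continuous_deriv le_rfl).continuousOn)
      ((hF1.continuous.sub continuous_const).mul (hF2.continuous_deriv le_rfl))
  rw [hφa, hφb] at key
  rw [← key]
  apply intervalIntegral.integral_congr
  intro t _
  simp only [Function.comp, smul_eq_mul, hchain]
  ring
end

section
/- Let X : [a,c] → ℝ^d have C¹ components and let b ∈ (a,c). Then the second-order iterated integral satisfies Chen's identity: S^{i_1,i_2}_{a,c}(X) = S^{i_1,i_2}_{a,b}(X) + S^{i_1}_{a,b}(X) · S^{i_2}_{b,c}(X) + S^{i_1,i_2}_{b,c}(X). -/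
open MeasureTheory intervalIntegral

/-- Chen's identity at level 2:
S^{i1,i2}_{a,c} = S^{i1,i2}_{a,b} + S^{i1}_{a,b} S^{i2}_{b,c} + S^{i1,i2}_{b,c},
where S^{i}_{u,v}(X) = X^i_v - X^i_u and
S^{i1,i2}_{u,v}(X) = ∫_u^v (∫_u^{t2} (X^{i1})'(t1) dt1) (X^{i2})'(t2) dt2. -/
theorem chen_identity_level_two (d : ℕ) (a b c : ℝ) (hab : a < b) (hbc : b < c)
    (X : ℝ → Fin d → ℝ) (hX : ∀ i, ContDiff ℝ 1 (fun t => X t i)) (i1 i2 : Fin d) :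
    (∫ t2 in a..c, (∫ t1 in a..t2, deriv (fun t => X t i1) t1) *
        deriv (fun t => X t i2) t2) =
      (∫ t2 in a..b, (∫ t1 in a..t2, deriv (fun t => X t i1) t1) *
          deriv (fun t => X t i2) t2) +
      (X b i1 - X a i1) * (X c i2 - X b i2) +
      ∫ t2 in b..c, (∫ t1 in b..t2, deriv (fun t => X t i1) t1) *
          deriv (fun t => X t i2) t2 := by
  have hc1 : Continuous (deriv (fun t => X t i1)) := (hX i1).continuous_deriv le_rfl
  have hc2 : Continuous (deriv (fun t => X t i2)) := (hX i2).continuous_deriv le_rfl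
  have hcont : ∀ u : ℝ, Continuous (fun t2 =>
      (∫ t1 in u..t2, deriv (fun t => X t i1) t1) * deriv (fun t => X t i2) t2) :=
    fun u => (intervalIntegral.continuous_primitive
      (fun s t => hc1.intervalIntegrable s t) u).mul hc2
  have hint : ∀ u p q : ℝ, IntervalIntegrable (fun t2 =>
      (∫ t1 in u..t2, deriv (fun t => X t i1) t1) * deriv (fun t => X t i2) t2)
      volume p q := fun u p q => (hcont u).intervalIntegrable p q
  have hftc : ∀ (i : Fin d) (u v : ℝ),
      (∫ t in u..v, deriv (fun t => X t i) t) = X v i - X u i := fun i u v =>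
    intervalIntegral.integral_deriv_eq_sub
      (fun t _ => ((hX i).differentiable one_ne_zero).differentiableAt)
      (((hX i).continuous_deriv le_rfl).intervalIntegrable u v)
  have hsplit : (∫ t2 in a..c, (∫ t1 in a..t2, deriv (fun t => X t i1) t1) *
      deriv (fun t => X t i2) t2) =
      (∫ t2 in a..b, (∫ t1 in a..t2, deriv (fun t => X t i1) t1) *
        deriv (fun t => X t i2) t2) +
      ∫ t2 in b..c, (∫ t1 in a..t2, deriv (fun t => X t i1) t1) *
        deriv (fun t => X t i2) t2 :=
    (intervalIntegral.integral_add_adjacent_intervals (hint a a b) (hint a b c)).symm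
  have hkey : (∫ t2 in b..c, (∫ t1 in a..t2, deriv (fun t => X t i1) t1) *
      deriv (fun t => X t i2) t2) =
      (X b i1 - X a i1) * (X c i2 - X b i2) +
      ∫ t2 in b..c, (∫ t1 in b..t2, deriv (fun t => X t i1) t1) *
        deriv (fun t => X t i2) t2 := by
    have heq : ∀ t2 : ℝ,
        (∫ t1 in a..t2, deriv (fun t => X t i1) t1) * deriv (fun t => X t i2) t2 =
        (X b i1 - X a i1) * deriv (fun t => X t i2) t2 +
        (∫ t1 in b..t2, deriv (fun t => X t i1) t1) * deriv (fun t => X t i2) t2 := by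
      intro t2
      rw [← intervalIntegral.integral_add_adjacent_intervals
        (hc1.intervalIntegrable a b) (hc1.intervalIntegrable b t2), hftc i1 a b, add_mul]
    rw [intervalIntegral.integral_congr (fun t2 _ => heq t2),
      intervalIntegral.integral_add (f := fun t2 =>
          (X b i1 - X a i1) * deriv (fun t => X t i2) t2)
          ((continuous_const.mul hc2).intervalIntegrable b c)
        (hint b b c), intervalIntegral.integral_const_mul, hftc i2 b c]
  rw [hsplit, hkey, add_assoc]
end

section
/- Let X : [a,c] → ℝ^d have C¹ components and let b ∈ (a,c). Then the third-order iterated integral satisfies Chen's identity: S^{i_1,i_2,i_3}_{a,c}(X) = S^{i_1,i_2,i_3}_{a,b}(X) + S^{i_1,i_2}_{a,b}(X) S^{i_3}_{b,c}(X) + S^{i_1}_{a,b}(X) S^{i_2,i_3}_{b,c}(X) + S^{i_1,i_2,i_3}_{b,c}(X). -/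
open MeasureTheory intervalIntegral

/-- Chen's identity at level 3:
S^{i1,i2,i3}_{a,c} = S^{i1,i2,i3}_{a,b} + S^{i1,i2}_{a,b} S^{i3}_{b,c}
  + S^{i1}_{a,b} S^{i2,i3}_{b,c} + S^{i1,i2,i3}_{b,c},
with iterated integrals of a C¹ path defined recursively. -/
theorem chen_identity_level_three (d : ℕ) (a b c : ℝ) (hab : a < b) (hbc : b < c)
    (X : ℝ → Fin d → ℝ) (hX : ∀ i, ContDiff ℝ 1 (fun t => X t i)) (i1 i2 i3 : Fin d) :
    (∫ t3 in a..c,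
      (∫ t2 in a..t3, (∫ t1 in a..t2, deriv (fun t => X t i1) t1) *
          deriv (fun t => X t i2) t2) * deriv (fun t => X t i3) t3) =
      (∫ t3 in a..b,
        (∫ t2 in a..t3, (∫ t1 in a..t2, deriv (fun t => X t i1) t1) *
            deriv (fun t => X t i2) t2) * deriv (fun t => X t i3) t3) +
      (∫ t2 in a..b, (∫ t1 in a..t2, deriv (fun t => X t i1) t1) *
          deriv (fun t => X t i2) t2) * (X c i3 - X b i3) +
      (X b i1 - X a i1) *
        (∫ t2 in b..c, (∫ t1 in b..t2, deriv (fun t => X t i2) t1) *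
            deriv (fun t => X t i3) t2) +
      ∫ t3 in b..c,
        (∫ t2 in b..t3, (∫ t1 in b..t2, deriv (fun t => X t i1) t1) *
            deriv (fun t => X t i2) t2) * deriv (fun t => X t i3) t3 := by
  set f1 := deriv (fun t => X t i1) with hf1d
  set f2 := deriv (fun t => X t i2) with hf2d
  set f3 := deriv (fun t => X t i3) with hf3d
  have c1 : Continuous f1 := (hX i1).continuous_deriv le_rfl
  have c2 : Continuous f2 := (hX i2).continuous_deriv le_rfl
  have c3 : Continuous f3 := (hX i3).continuous_deriv le_rfl
  have int1 : ∀ u v : ℝ, IntervalIntegrable f1 volume u v := fun u v => c1.intervalIntegrable u v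
  have cF1a : Continuous (fun t => ∫ s in a..t, f1 s) := continuous_primitive int1 a
  have cF1b : Continuous (fun t => ∫ s in b..t, f1 s) := continuous_primitive int1 b
  have ftc1 : (∫ s in a..b, f1 s) = X b i1 - X a i1 :=
    integral_deriv_eq_sub (fun x _ => ((hX i1).differentiable one_ne_zero).differentiableAt) (int1 a b)
  have ftc2 : ∀ t : ℝ, (∫ s in b..t, f2 s) = X t i2 - X b i2 := fun t =>
    integral_deriv_eq_sub (fun x _ => ((hX i2).differentiable one_ne_zero).differentiableAt)
      (c2.intervalIntegrable b t)
  have ftc3 : (∫ s in b..c, f3 s) = X c i3 - X b i3 :=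
    integral_deriv_eq_sub (fun x _ => ((hX i3).differentiable one_ne_zero).differentiableAt)
      (c3.intervalIntegrable b c)
  set A := X b i1 - X a i1 with hA
  have keyG : ∀ t3 : ℝ, (∫ t2 in a..t3, (∫ t1 in a..t2, f1 t1) * f2 t2)
      = (∫ t2 in a..b, (∫ t1 in a..t2, f1 t1) * f2 t2)
        + A * (X t3 i2 - X b i2)
        + (∫ t2 in b..t3, (∫ t1 in b..t2, f1 t1) * f2 t2) := by
    intro t3
    rw [← integral_add_adjacent_intervals (f := fun t2 => (∫ t1 in a..t2, f1 t1) * f2 t2) ((cF1a.mul c2).intervalIntegrable a b)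
        ((cF1a.mul c2).intervalIntegrable b t3), add_assoc]
    congr 1
    have hcongr : (∫ t2 in b..t3, (∫ t1 in a..t2, f1 t1) * f2 t2)
        = ∫ t2 in b..t3, (A * f2 t2 + (∫ t1 in b..t2, f1 t1) * f2 t2) := by
      apply integral_congr
      intro t2 _
      show (∫ t1 in a..t2, f1 t1) * f2 t2 = A * f2 t2 + (∫ t1 in b..t2, f1 t1) * f2 t2
      rw [← add_mul, ← ftc1, integral_add_adjacent_intervals (int1 a b) (int1 b t2)]
    rw [hcongr, integral_add (f := fun t2 => A * f2 t2) (g := fun t2 => (∫ t1 in b..t2, f1 t1) * f2 t2) ((continuous_const.mul c2).intervalIntegrable b t3)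
        ((cF1b.mul c2).intervalIntegrable b t3), intervalIntegral.integral_const_mul, ftc2]
  set Gb := fun t3 => ∫ t2 in b..t3, (∫ t1 in b..t2, f1 t1) * f2 t2 with hGb
  have cGb : Continuous Gb :=
    continuous_primitive (fun u v => (cF1b.mul c2).intervalIntegrable u v) b
  set K := ∫ t2 in a..b, (∫ t1 in a..t2, f1 t1) * f2 t2 with hK
  have cGa : Continuous (fun t3 => ∫ t2 in a..t3, (∫ t1 in a..t2, f1 t1) * f2 t2) :=
    continuous_primitive (fun u v => (cF1a.mul c2).intervalIntegrable u v) a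
  rw [← integral_add_adjacent_intervals
      (f := fun t3 => (∫ t2 in a..t3, (∫ t1 in a..t2, f1 t1) * f2 t2) * f3 t3) ((cGa.mul c3).intervalIntegrable a b)
      ((cGa.mul c3).intervalIntegrable b c)]
  have hcongr2 : (∫ t3 in b..c, (∫ t2 in a..t3, (∫ t1 in a..t2, f1 t1) * f2 t2) * f3 t3)
      = ∫ t3 in b..c, (K * f3 t3 + A * ((X t3 i2 - X b i2) * f3 t3) + Gb t3 * f3 t3) := by
    apply integral_congr
    intro t3 _
    show (∫ t2 in a..t3, (∫ t1 in a..t2, f1 t1) * f2 t2) * f3 t3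
        = K * f3 t3 + A * ((X t3 i2 - X b i2) * f3 t3) + Gb t3 * f3 t3
    rw [keyG t3]; ring
  have cX2 : Continuous (fun t3 => X t3 i2 - X b i2) := ((hX i2).continuous).sub continuous_const
  have i_1 : IntervalIntegrable (fun t3 => K * f3 t3) volume b c :=
    (continuous_const.mul c3).intervalIntegrable b c
  have i_2 : IntervalIntegrable (fun t3 => A * ((X t3 i2 - X b i2) * f3 t3)) volume b c :=
    (continuous_const.mul (cX2.mul c3)).intervalIntegrable b c
  have i_3 : IntervalIntegrable (fun t3 => Gb t3 * f3 t3) volume b c :=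
    (cGb.mul c3).intervalIntegrable b c
  rw [hcongr2, integral_add (i_1.add i_2) i_3, integral_add i_1 i_2,
    intervalIntegral.integral_const_mul, intervalIntegral.integral_const_mul, ftc3]
  have hlast : (∫ t3 in b..c, (X t3 i2 - X b i2) * f3 t3)
      = ∫ t2 in b..c, (∫ t1 in b..t2, f2 t1) * f3 t2 := by
    apply integral_congr
    intro t _
    show (X t i2 - X b i2) * f3 t = (∫ t1 in b..t, f2 t1) * f3 t
    rw [ftc2 t]
  rw [hlast]
  ring
end
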